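/- arXiv:0812.3007 — 2 statements merged into one kernel-verified Lean document; each statement's English description precedes it below -/
import Mathlib

section
/- Assume inf_{x,y∈S} κ(x,y) > 0, ‖T_κ‖_HS < ∞, S ⊆ ℝ, κ(x,y) is non-decreasing in each argument, and κ(x,y) ≤ c₁·T_κ[1](x)·T_κ[1](y) for all x,y ∈ S and some constant c₁ > 0. Let λ = ‖T_κ‖ and let φ ∈ L²(S,μ) be non-negative with ‖φ‖_{L²(μ)} = 1 and T_κ φ = λ φ. Then, with c₂ = ∫_S φ dμ > 0 and ψ(x) = (∫_S κ(x,y)² dμ(y))^{1/2}: (i) (c₂/λ)·T_κ[1](x) ≤ φ(x) ≤ (1/λ)·ψ(x) for all x ∈ S; (ii) ψ(x)/φ(x) ≤ c₁·λ·‖T_κ‖_HS/c₂ for all x ∈ S; and (iii) inf_{x∈S} φ(x) > 0. -/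
open MeasureTheory Filter
open scoped ENNReal

/-- The `L²(μ)` operator norm of the integral operator `T_κ`. -/
noncomputable def opNorm {S : Type*} [MeasurableSpace S] (μ : Measure S)
    (κ : S → S → ℝ) : ℝ≥0∞ :=
  ⨆ (f : S → ℝ≥0∞) (_ : Measurable f) (_ : (∫⁻ x, f x ^ 2 ∂μ) ^ ((1 : ℝ) / 2) ≤ 1),
    (∫⁻ x, (∫⁻ y, ENNReal.ofReal (κ x y) * f y ∂μ) ^ 2 ∂μ) ^ ((1 : ℝ) / 2)

section Aux

variable {α : Type*} [MeasurableSpace α] {μ : Measure α}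

lemma integrable_mul_of_sq {f g : α → ℝ}
    (hfm : AEStronglyMeasurable f μ) (hgm : AEStronglyMeasurable g μ)
    (hf2 : Integrable (fun x => f x ^ 2) μ) (hg2 : Integrable (fun x => g x ^ 2) μ) :
    Integrable (fun x => f x * g x) μ := by
  refine Integrable.mono' ((hf2.add hg2).div_const 2) (hfm.mul hgm) ?_
  filter_upwards with x
  simp only [Pi.add_apply]
  rw [Real.norm_eq_abs, abs_le]
  constructor <;> nlinarith [sq_nonneg (f x - g x), sq_nonneg (f x + g x)]

/-- Cauchy–Schwarz for integrals of nonnegative functions. -/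
lemma integral_mul_le_sqrt_mul_sqrt (f g : α → ℝ)
    (hf2 : Integrable (fun x => f x ^ 2) μ) (hg2 : Integrable (fun x => g x ^ 2) μ)
    (hfg : Integrable (fun x => f x * g x) μ)
    (hf : ∀ x, 0 ≤ f x) (hg : ∀ x, 0 ≤ g x) :
    ∫ x, f x * g x ∂μ ≤ Real.sqrt (∫ x, f x ^ 2 ∂μ) * Real.sqrt (∫ x, g x ^ 2 ∂μ) := by
  set A := Real.sqrt (∫ x, f x ^ 2 ∂μ) with hA
  set B := Real.sqrt (∫ x, g x ^ 2 ∂μ) with hB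
  have hIf : 0 ≤ ∫ x, f x ^ 2 ∂μ := integral_nonneg fun x => sq_nonneg _
  have hIg : 0 ≤ ∫ x, g x ^ 2 ∂μ := integral_nonneg fun x => sq_nonneg _
  have hA2 : A ^ 2 = ∫ x, f x ^ 2 ∂μ := Real.sq_sqrt hIf
  have hB2 : B ^ 2 = ∫ x, g x ^ 2 ∂μ := Real.sq_sqrt hIg
  have hA0 : 0 ≤ A := Real.sqrt_nonneg _
  have hB0 : 0 ≤ B := Real.sqrt_nonneg _
  rcases hA0.eq_or_lt with hA' | hA'
  · have h0 : ∫ x, f x ^ 2 ∂μ = 0 := by rw [← hA2, ← hA']; ring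
    have hf0 : (fun x => f x ^ 2) =ᵐ[μ] 0 :=
      (integral_eq_zero_iff_of_nonneg (fun x => sq_nonneg _) hf2).1 h0
    have hz : ∫ x, f x * g x ∂μ = 0 := by
      rw [integral_eq_zero_iff_of_nonneg (fun x => mul_nonneg (hf x) (hg x)) hfg]
      filter_upwards [hf0] with x hx
      have hfx : f x = 0 := by
        have : f x ^ 2 = 0 := hx
        nlinarith [sq_nonneg (f x)]
      simp [hfx]
    rw [hz]; positivity
  rcases hB0.eq_or_lt with hB' | hB'
  · have h0 : ∫ x, g x ^ 2 ∂μ = 0 := by rw [← hB2, ← hB']; ring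
    have hg0 : (fun x => g x ^ 2) =ᵐ[μ] 0 :=
      (integral_eq_zero_iff_of_nonneg (fun x => sq_nonneg _) hg2).1 h0
    have hz : ∫ x, f x * g x ∂μ = 0 := by
      rw [integral_eq_zero_iff_of_nonneg (fun x => mul_nonneg (hf x) (hg x)) hfg]
      filter_upwards [hg0] with x hx
      have hgx : g x = 0 := by
        have : g x ^ 2 = 0 := hx
        nlinarith [sq_nonneg (g x)]
      simp [hgx]
    rw [hz]; positivity
  have hAne : A ≠ 0 := ne_of_gt hA'
  have hBne : B ≠ 0 := ne_of_gt hB'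
  have key : ∀ x, f x * g x ≤ (B / A / 2) * f x ^ 2 + (A / B / 2) * g x ^ 2 := by
    intro x
    rw [← sub_nonneg]
    have hrw : (B / A / 2) * f x ^ 2 + (A / B / 2) * g x ^ 2 - f x * g x
        = (B * f x - A * g x) ^ 2 / (2 * A * B) := by
      field_simp
      ring
    rw [hrw]
    positivity
  calc ∫ x, f x * g x ∂μ
      ≤ ∫ x, (B / A / 2) * f x ^ 2 + (A / B / 2) * g x ^ 2 ∂μ :=
        integral_mono hfg ((hf2.const_mul _).add (hg2.const_mul _)) key
    _ = (B / A / 2) * (∫ x, f x ^ 2 ∂μ) + (A / B / 2) * (∫ x, g x ^ 2 ∂μ) := by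
        rw [integral_add (hf2.const_mul _) (hg2.const_mul _), integral_const_mul _ _,
          integral_const_mul _ _]
    _ = A * B := by rw [← hA2, ← hB2]; field_simp; ring

/-- Chebyshev's integral inequality. -/
lemma chebyshev_integral [IsProbabilityMeasure μ] (f g : α → ℝ)
    (hf : Integrable f μ) (hg : Integrable g μ) (hfg : Integrable (fun x => f x * g x) μ)
    (hmono : ∀ x y, 0 ≤ (f x - f y) * (g x - g y)) :
    (∫ x, f x ∂μ) * (∫ x, g x ∂μ) ≤ ∫ x, f x * g x ∂μ := by
  set P := μ.prod μ with hPdef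
  have hA : Integrable (fun p : α × α => f p.1 * g p.1) P := by
    have := hfg.mul_prod (integrable_const (1 : ℝ)) (ν := μ)
    simpa using this
  have hB : Integrable (fun p : α × α => f p.2 * g p.2) P := by
    have := (integrable_const (1 : ℝ) (μ := μ)).mul_prod hfg
    simpa using this
  have hC : Integrable (fun p : α × α => f p.1 * g p.2) P := hf.mul_prod hg
  have hD : Integrable (fun p : α × α => f p.2 * g p.1) P :=
    (hg.mul_prod hf).congr (Filter.Eventually.of_forall fun p => mul_comm _ _)
  have h0 : 0 ≤ ∫ p, (f p.1 - f p.2) * (g p.1 - g p.2) ∂P :=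
    integral_nonneg fun p => hmono _ _
  have hexp : ∫ p, (f p.1 - f p.2) * (g p.1 - g p.2) ∂P
      = 2 * (∫ x, f x * g x ∂μ) - 2 * ((∫ x, f x ∂μ) * (∫ x, g x ∂μ)) := by
    have heq : (fun p : α × α => (f p.1 - f p.2) * (g p.1 - g p.2))
        = fun p : α × α => (f p.1 * g p.1 + f p.2 * g p.2) - (f p.1 * g p.2 + f p.2 * g p.1) := by
      funext p; ring
    have hAB : Integrable (fun p : α × α => f p.1 * g p.1 + f p.2 * g p.2) P := hA.add hB
    have hCD : Integrable (fun p : α × α => f p.1 * g p.2 + f p.2 * g p.1) P := hC.add hD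
    rw [heq, integral_sub hAB hCD, integral_add hA hB, integral_add hC hD]
    have e1 : ∫ p : α × α, f p.1 * g p.1 ∂P = ∫ x, f x * g x ∂μ := by
      have := integral_prod_mul (μ := μ) (ν := μ) (f := fun x => f x * g x)
        (g := fun _ => (1 : ℝ))
      simpa using this
    have e2 : ∫ p : α × α, f p.2 * g p.2 ∂P = ∫ x, f x * g x ∂μ := by
      have := integral_prod_mul (μ := μ) (ν := μ) (f := fun _ => (1 : ℝ))
        (g := fun x => f x * g x)
      simpa using this
    have e3 : ∫ p : α × α, f p.1 * g p.2 ∂P = (∫ x, f x ∂μ) * (∫ x, g x ∂μ) :=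
      integral_prod_mul (f := f) (g := g)
    have e4 : ∫ p : α × α, f p.2 * g p.1 ∂P = (∫ x, f x ∂μ) * (∫ x, g x ∂μ) := by
      have : ∫ p : α × α, g p.1 * f p.2 ∂P = (∫ x, g x ∂μ) * (∫ x, f x ∂μ) :=
        integral_prod_mul (f := g) (g := f)
      rw [show (fun p : α × α => f p.2 * g p.1) = fun p : α × α => g p.1 * f p.2 from
        funext fun p => mul_comm _ _, this]
      ring
    rw [e1, e2, e3, e4]; ring
  rw [hexp] at h0
  linarith

end Aux

theorem stmt17 (S : Set ℝ) (μ : Measure S) [IsProbabilityMeasure μ]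
    (κ : S → S → ℝ) (hκmeas : Measurable (Function.uncurry κ))
    (hκsymm : ∀ x y, κ x y = κ y x) (hκnonneg : ∀ x y, 0 ≤ κ x y)
    (hκinf : ∃ b : ℝ, 0 < b ∧ ∀ x y, b ≤ κ x y)
    (hmono₁ : ∀ x x' y : S, (x : ℝ) ≤ (x' : ℝ) → κ x y ≤ κ x' y)
    (hmono₂ : ∀ x y y' : S, (y : ℝ) ≤ (y' : ℝ) → κ x y ≤ κ x y')
    (c₁ : ℝ) (hc₁ : 0 < c₁)
    (T1 : S → ℝ) (hT1 : ∀ x, T1 x = ∫ y, κ x y ∂μ)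
    (hTT : ∀ x y, κ x y ≤ c₁ * T1 x * T1 y)
    (hκ2 : ∀ x, Integrable (fun y => κ x y ^ 2) μ)
    (ψ : S → ℝ) (hψ : ∀ x, ψ x = Real.sqrt (∫ y, κ x y ^ 2 ∂μ))
    (lamHS : ℝ) (hlamHS0 : 0 ≤ lamHS)
    (hHS : (∫⁻ x, ∫⁻ y, ENNReal.ofReal (κ x y) ^ 2 ∂μ ∂μ) ^ ((1 : ℝ) / 2)
      = ENNReal.ofReal lamHS)
    (lam : ℝ) (hlam0 : 0 ≤ lam) (hlam : opNorm μ κ = ENNReal.ofReal lam)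
    (φ : S → ℝ) (hφmeas : Measurable φ) (hφnonneg : ∀ x, 0 ≤ φ x)
    (hφL2 : MemLp φ 2 μ) (hφnorm : eLpNorm φ 2 μ = 1)
    (hφeig : ∀ x, ∫ y, κ x y * φ y ∂μ = lam * φ x) :
    0 < ∫ x, φ x ∂μ ∧
    (∀ x, ((∫ x', φ x' ∂μ) / lam) * T1 x ≤ φ x) ∧
    (∀ x, φ x ≤ (1 / lam) * ψ x) ∧
    (∀ x, ψ x / φ x ≤ c₁ * lam * lamHS / (∫ x', φ x' ∂μ)) ∧
    (∃ c₀ : ℝ, 0 < c₀ ∧ ∀ x, c₀ ≤ φ x) := by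
  obtain ⟨b, hb, hbκ⟩ := hκinf
  have hSne : Nonempty S := by
    by_contra h
    rw [not_nonempty_iff] at h
    have h1 : μ Set.univ = 1 := measure_univ
    rw [Set.univ_eq_empty_iff.2 h] at h1
    simp at h1
  -- measurability and integrability
  have hκx_meas : ∀ x : S, Measurable (fun y => κ x y) := fun x => hκmeas.of_uncurry_left
  have hκxL2 : ∀ x, MemLp (fun y => κ x y) 2 μ := fun x =>
    (memLp_two_iff_integrable_sq (hκx_meas x).aestronglyMeasurable).2 (hκ2 x)
  have hκx_int : ∀ x, Integrable (fun y => κ x y) μ := fun x => (hκxL2 x).integrable one_le_two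
  have hφ2 : Integrable (fun x => φ x ^ 2) μ := hφL2.integrable_sq
  have hφint : Integrable φ μ := hφL2.integrable one_le_two
  have hκφ_int : ∀ x, Integrable (fun y => κ x y * φ y) μ := fun x =>
    integrable_mul_of_sq (hκx_meas x).aestronglyMeasurable hφmeas.aestronglyMeasurable
      (hκ2 x) hφ2
  -- ∫ φ² = 1
  have hφsq1 : ∫ x, φ x ^ 2 ∂μ = 1 := by
    have key : ∫⁻ x, ‖φ x‖ₑ ^ (2 : ℝ) ∂μ = ENNReal.ofReal (∫ x, φ x ^ 2 ∂μ) := by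
      rw [ofReal_integral_eq_lintegral_ofReal hφ2 (ae_of_all _ fun x => sq_nonneg _)]
      refine lintegral_congr fun x => ?_
      rw [Real.enorm_eq_ofReal (hφnonneg x), show ((2 : ℝ)) = ((2 : ℕ) : ℝ) by norm_num,
        ENNReal.rpow_natCast, ← ENNReal.ofReal_pow (hφnonneg x)]
    have h1 : eLpNorm φ 2 μ = (ENNReal.ofReal (∫ x, φ x ^ 2 ∂μ)) ^ ((1 : ℝ) / 2) := by
      rw [eLpNorm_eq_lintegral_rpow_enorm_toReal two_ne_zero ENNReal.ofNat_ne_top]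
      simp only [ENNReal.toReal_ofNat]
      rw [key]
    rw [h1] at hφnorm
    have h3 := congrArg (· ^ (2 : ℝ)) hφnorm
    simp only [← ENNReal.rpow_mul, ENNReal.one_rpow] at h3
    norm_num at h3
    exact h3
  set c₂ := ∫ x, φ x ∂μ with hc₂def
  have hc₂0 : 0 ≤ c₂ := integral_nonneg hφnonneg
  have hc₂ : 0 < c₂ := by
    rcases hc₂0.eq_or_lt with h | h
    · exfalso
      have hφ0 : φ =ᵐ[μ] 0 := (integral_eq_zero_iff_of_nonneg hφnonneg hφint).1 h.symm
      have hz : ∫ x, φ x ^ 2 ∂μ = 0 := by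
        calc ∫ x, φ x ^ 2 ∂μ = ∫ _x, (0 : ℝ) ∂μ :=
              integral_congr_ae (hφ0.mono fun x hx => by simp [hx])
          _ = 0 := integral_zero _ _
      rw [hφsq1] at hz
      norm_num at hz
    · exact h
  obtain ⟨x₀⟩ := hSne
  have heig_ge : ∀ x, b * c₂ ≤ lam * φ x := by
    intro x
    rw [← hφeig x]
    calc b * c₂ = ∫ y, b * φ y ∂μ := by rw [integral_const_mul _ _, hc₂def]
      _ ≤ ∫ y, κ x y * φ y ∂μ :=
          integral_mono (hφint.const_mul b) (hκφ_int x) fun y =>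
            mul_le_mul_of_nonneg_right (hbκ x y) (hφnonneg y)
  have hlampos : 0 < lam := by
    rcases hlam0.eq_or_lt with h | h
    · exfalso
      have h1 := heig_ge x₀
      rw [← h] at h1
      nlinarith [mul_pos hb hc₂]
    · exact h
  have hφpos : ∀ x, 0 < φ x := by
    intro x
    by_contra h
    push_neg at h
    have h1 : lam * φ x ≤ 0 := mul_nonpos_of_nonneg_of_nonpos hlampos.le h
    nlinarith [heig_ge x, mul_pos hb hc₂]
  -- φ is monotone
  have hφmono : ∀ x x' : S, (x : ℝ) ≤ (x' : ℝ) → φ x ≤ φ x' := by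
    intro x x' hxx'
    have h1 : ∫ y, κ x y * φ y ∂μ ≤ ∫ y, κ x' y * φ y ∂μ :=
      integral_mono (hκφ_int x) (hκφ_int x') fun y =>
        mul_le_mul_of_nonneg_right (hmono₁ x x' y hxx') (hφnonneg y)
    rw [hφeig, hφeig] at h1
    exact le_of_mul_le_mul_left h1 hlampos
  -- Chebyshev
  have hcheb : ∀ x, c₂ * T1 x ≤ lam * φ x := by
    intro x
    have hmm : ∀ y z : S, 0 ≤ ((fun y => κ x y) y - (fun y => κ x y) z) * (φ y - φ z) := by
      intro y z
      rcases le_total ((y : ℝ)) ((z : ℝ)) with h | h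
      · nlinarith [hmono₂ x y z h, hφmono y z h]
      · nlinarith [hmono₂ x z y h, hφmono z y h]
    have h := chebyshev_integral (μ := μ) (fun y => κ x y) φ (hκx_int x) hφint (hκφ_int x) hmm
    rw [← hc₂def] at h
    rw [hT1 x, ← hφeig x]
    have hcomm : c₂ * (∫ y, κ x y ∂μ) = (∫ y, κ x y ∂μ) * c₂ := mul_comm _ _
    linarith
  -- (i) lower bound
  have hlow : ∀ x, (c₂ / lam) * T1 x ≤ φ x := by
    intro x
    rw [div_mul_eq_mul_div, div_le_iff₀ hlampos]
    calc c₂ * T1 x ≤ lam * φ x := hcheb x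
      _ = φ x * lam := mul_comm _ _
  -- ψ basics
  have hψ0 : ∀ x, 0 ≤ ψ x := fun x => (hψ x) ▸ Real.sqrt_nonneg _
  have hψsq : ∀ x, ψ x ^ 2 = ∫ y, κ x y ^ 2 ∂μ := fun x => by
    rw [hψ x]; exact Real.sq_sqrt (integral_nonneg fun y => sq_nonneg _)
  -- (ii) upper bound
  have hupper : ∀ x, lam * φ x ≤ ψ x := by
    intro x
    rw [← hφeig x]
    have h := integral_mul_le_sqrt_mul_sqrt (μ := μ) (fun y => κ x y) φ (hκ2 x) hφ2
      (hκφ_int x) (hκnonneg x) hφnonneg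
    rw [hφsq1, Real.sqrt_one, mul_one, ← hψ x] at h
    exact h
  have hii : ∀ x, φ x ≤ (1 / lam) * ψ x := by
    intro x
    rw [one_div_mul_eq_div, le_div_iff₀ hlampos]
    have := hupper x
    linarith [mul_comm (φ x) lam, mul_comm lam (φ x)]
  -- T1 facts
  have hT1m : StronglyMeasurable T1 := by
    rw [show T1 = fun x => ∫ y, κ x y ∂μ from funext hT1]
    exact hκmeas.stronglyMeasurable.integral_prod_right'
  have hT1b : ∀ x, b ≤ T1 x := by
    intro x
    rw [hT1 x]
    calc b = ∫ _y, b ∂μ := by simp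
      _ ≤ ∫ y, κ x y ∂μ := integral_mono (integrable_const b) (hκx_int x) (hbκ x)
  have hT1pos : ∀ x, 0 < T1 x := fun x => lt_of_lt_of_le hb (hT1b x)
  have hT1ψ : ∀ x, T1 x ≤ ψ x := by
    intro x
    have h := integral_mul_le_sqrt_mul_sqrt (μ := μ) (fun y => κ x y) (fun _ => (1 : ℝ))
      (hκ2 x) (by simpa using integrable_const (1 : ℝ)) (by simpa using hκx_int x)
      (hκnonneg x) (fun _ => zero_le_one)
    simp only [mul_one, one_pow] at h
    rw [integral_const] at h
    simp only [measure_univ, probReal_univ, ENNReal.toReal_one, smul_eq_mul, one_mul, Real.sqrt_one,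
      mul_one] at h
    rw [hT1 x, hψ x]
    exact h
  have hψpos : ∀ x, 0 < ψ x := fun x => lt_of_lt_of_le (hT1pos x) (hT1ψ x)
  -- ∫ ψ² = lamHS²
  have hψ2meas : StronglyMeasurable (fun x : S => ∫ y, κ x y ^ 2 ∂μ) :=
    (hκmeas.pow_const 2).stronglyMeasurable.integral_prod_right'
  have hHS' : ∫⁻ x, ENNReal.ofReal (∫ y, κ x y ^ 2 ∂μ) ∂μ = ENNReal.ofReal (lamHS ^ 2) := by
    have h1 : ∀ x : S, ∫⁻ y, ENNReal.ofReal (κ x y) ^ 2 ∂μ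
        = ENNReal.ofReal (∫ y, κ x y ^ 2 ∂μ) := by
      intro x
      rw [ofReal_integral_eq_lintegral_ofReal (hκ2 x) (ae_of_all _ fun y => sq_nonneg _)]
      exact lintegral_congr fun y => (ENNReal.ofReal_pow (hκnonneg x y) 2).symm
    have h2 : (∫⁻ x, ENNReal.ofReal (∫ y, κ x y ^ 2 ∂μ) ∂μ) ^ ((1 : ℝ) / 2)
        = ENNReal.ofReal lamHS := by
      rw [← hHS]
      congr 1
      exact lintegral_congr fun x => (h1 x).symm
    have h3 := congrArg (· ^ (2 : ℝ)) h2
    simp only [← ENNReal.rpow_mul] at h3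
    norm_num at h3
    rw [h3]
    exact (ENNReal.ofReal_pow hlamHS0 2).symm
  have hψ2eq : (fun x : S => ψ x ^ 2) = fun x => ∫ y, κ x y ^ 2 ∂μ := funext hψsq
  have hψ2int : Integrable (fun x => ψ x ^ 2) μ := by
    rw [hψ2eq]
    refine ⟨hψ2meas.aestronglyMeasurable, ?_⟩
    rw [hasFiniteIntegral_iff_ofReal (ae_of_all _ fun x => integral_nonneg fun y => sq_nonneg _)]
    rw [hHS']
    exact ENNReal.ofReal_lt_top
  have hψ2val : ∫ x, ψ x ^ 2 ∂μ = lamHS ^ 2 := by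
    have h1 : ENNReal.ofReal (∫ x, ψ x ^ 2 ∂μ) = ENNReal.ofReal (lamHS ^ 2) := by
      rw [ofReal_integral_eq_lintegral_ofReal hψ2int (ae_of_all _ fun x => sq_nonneg _)]
      rw [show (fun x : S => ENNReal.ofReal (ψ x ^ 2))
        = fun x => ENNReal.ofReal (∫ y, κ x y ^ 2 ∂μ) by
          funext x; rw [hψsq x]]
      exact hHS'
    rw [ENNReal.ofReal_eq_ofReal_iff (integral_nonneg fun x => sq_nonneg _)
      (sq_nonneg _)] at h1
    exact h1
  -- T1 ∈ L²
  have hT12int : Integrable (fun x => T1 x ^ 2) μ := by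
    refine hψ2int.mono' ((hT1m.measurable.pow_const 2).aestronglyMeasurable) ?_
    filter_upwards with x
    rw [Real.norm_eq_abs, abs_of_nonneg (sq_nonneg _)]
    exact pow_le_pow_left₀ (hT1pos x).le (hT1ψ x) 2
  have hT1L2 : Real.sqrt (∫ x, T1 x ^ 2 ∂μ) ≤ lamHS := by
    rw [← Real.sqrt_sq hlamHS0, ← hψ2val]
    exact Real.sqrt_le_sqrt (integral_mono hT12int hψ2int fun x =>
      pow_le_pow_left₀ (hT1pos x).le (hT1ψ x) 2)
  -- (iii)
  have hiii : ∀ x, ψ x ≤ c₁ * lamHS * T1 x := by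
    intro x
    have hT1κ_int : Integrable (fun y => T1 y * κ x y) μ :=
      integrable_mul_of_sq hT1m.aestronglyMeasurable (hκx_meas x).aestronglyMeasurable
        hT12int (hκ2 x)
    have h1 : ψ x ^ 2 ≤ c₁ * T1 x * ∫ y, T1 y * κ x y ∂μ := by
      rw [hψsq x, ← integral_const_mul _ _]
      refine integral_mono (hκ2 x) (hT1κ_int.const_mul _) fun y => ?_
      have h := hTT x y
      nlinarith [hκnonneg x y]
    have h2 : ∫ y, T1 y * κ x y ∂μ ≤ lamHS * ψ x := by
      have h := integral_mul_le_sqrt_mul_sqrt (μ := μ) T1 (fun y => κ x y) hT12int (hκ2 x)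
        hT1κ_int (fun y => (hT1pos y).le) (hκnonneg x)
      rw [← hψ x] at h
      calc ∫ y, T1 y * κ x y ∂μ ≤ Real.sqrt (∫ y, T1 y ^ 2 ∂μ) * ψ x := h
        _ ≤ lamHS * ψ x := mul_le_mul_of_nonneg_right hT1L2 (hψ0 x)
    have h4 : c₁ * T1 x * (∫ y, T1 y * κ x y ∂μ) ≤ c₁ * T1 x * (lamHS * ψ x) :=
      mul_le_mul_of_nonneg_left h2 (mul_nonneg hc₁.le (hT1pos x).le)
    have h5 : ψ x ^ 2 ≤ c₁ * T1 x * (lamHS * ψ x) := le_trans h1 h4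
    nlinarith [hψpos x]
  have hratio : ∀ x, ψ x / φ x ≤ c₁ * lam * lamHS / c₂ := by
    intro x
    rw [div_le_div_iff₀ (hφpos x) hc₂]
    have hstep := mul_le_mul_of_nonneg_right (hiii x) hc₂.le
    have hstep2 := mul_le_mul_of_nonneg_left (hcheb x) (by positivity : (0 : ℝ) ≤ c₁ * lamHS)
    nlinarith [hstep, hstep2]
  refine ⟨hc₂, hlow, hii, hratio, ⟨c₂ * b / lam, by positivity, fun x => ?_⟩⟩
  have h1 : c₂ * b / lam = (c₂ / lam) * b := by ring
  have h2 : (c₂ / lam) * b ≤ (c₂ / lam) * T1 x :=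
    mul_le_mul_of_nonneg_left (hT1b x) (by positivity)
  linarith [hlow x]
end

section
/- There exists a constant γ > 0 such that for all integers n ≥ 1, all real p with 0 < p < 1/4, and all integers k with 0 ≤ k ≤ n, the binomial probability satisfies C(n,k)·p^k·(1−p)^{n−k} ≤ (1 + γ·p²)^n · e^{−n p/(1−p)} · (n p/(1−p))^k / k! ; that is, P(Bin(n,p) = k) ≤ (1 + γ p²)^n · P(Po(n p/(1−p)) = k). -/
theorem stmt18 :
    ∃ γ : ℝ, 0 < γ ∧ ∀ n : ℕ, 1 ≤ n → ∀ p : ℝ, 0 < p → p < 1 / 4 →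
      ∀ k : ℕ, k ≤ n →
        (n.choose k : ℝ) * p ^ k * (1 - p) ^ (n - k) ≤
          (1 + γ * p ^ 2) ^ n * Real.exp (-(n * p / (1 - p))) *
            (n * p / (1 - p)) ^ k / (Nat.factorial k : ℝ) := by
  refine ⟨3, by norm_num, fun n hn p hp hp4 k hk => ?_⟩
  have h1p : (0:ℝ) < 1 - p := by linarith
  set q : ℝ := p / (1 - p) with hq
  have hq0 : 0 ≤ q := div_nonneg hp.le h1p.le
  have key : 1 - p ≤ (1 + 3 * p ^ 2) * Real.exp (-q) := by
    have h1 : 1 - q ≤ Real.exp (-q) := by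
      have := Real.add_one_le_exp (-q); linarith
    have h2 : 1 - p ≤ (1 + 3 * p ^ 2) * (1 - q) := by
      have hqe : 1 - q = (1 - 2 * p) / (1 - p) := by
        rw [hq]; field_simp; ring
      rw [hqe, ← mul_div_assoc, le_div_iff₀ h1p]
      nlinarith [sq_nonneg p, hp.le]
    calc 1 - p ≤ (1 + 3 * p ^ 2) * (1 - q) := h2
      _ ≤ (1 + 3 * p ^ 2) * Real.exp (-q) :=
        mul_le_mul_of_nonneg_left h1 (by nlinarith)
  have hp_eq : p = q * (1 - p) := by rw [hq]; field_simp
  have hpow : (1 - p) ^ k * (1 - p) ^ (n - k) = (1 - p) ^ n := by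
    rw [← pow_add, Nat.add_sub_cancel' hk]
  have hlhs : (n.choose k : ℝ) * p ^ k * (1 - p) ^ (n - k)
      = (n.choose k : ℝ) * q ^ k * (1 - p) ^ n := by
    rw [hq, div_pow, ← hpow]
    field_simp
  have hnq : (n : ℝ) * p / (1 - p) = (n : ℝ) * q := by
    rw [hq, mul_div_assoc]
  have hexp : Real.exp (-((n : ℝ) * q)) = Real.exp (-q) ^ n := by
    rw [← Real.exp_nat_mul]; ring_nf
  rw [hlhs, hnq, hexp, mul_pow]
  have hch : (n.choose k : ℝ) ≤ (n : ℝ) ^ k / (Nat.factorial k : ℝ) := by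
    have := Nat.choose_le_pow_div (α := ℝ) k n
    simpa using this
  calc (n.choose k : ℝ) * q ^ k * (1 - p) ^ n
      ≤ ((n : ℝ) ^ k / (Nat.factorial k : ℝ)) * q ^ k *
        ((1 + 3 * p ^ 2) * Real.exp (-q)) ^ n := by
        apply mul_le_mul
          (mul_le_mul_of_nonneg_right hch (pow_nonneg hq0 k))
          (pow_le_pow_left₀ h1p.le key n)
          (pow_nonneg h1p.le n)
        positivity
    _ = (1 + 3 * p ^ 2) ^ n * Real.exp (-q) ^ n * ((n : ℝ) ^ k * q ^ k) /
        (Nat.factorial k : ℝ) := by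
        rw [mul_pow]; ring
end
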